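/- Every connected partition of a cycle graph C on m vertices (m ≥ 3) is a connected partition of at least one of the m paths obtained from C by deleting a single edge; moreover, unless all vertices lie in one block, it is a connected partition of at least two such paths. -/

import Mathlib

open SimpleGraph Finset
open Fin.CommRing

lemma aux_induce_delete {V : Type*} (G : SimpleGraph V) (t : Set V) (u v : V)
    (hu : u ∉ t) : ((G.deleteEdges {s(u,v)}).induce t) = G.induce t := by
  ext ⟨x, hx⟩ ⟨y, hy⟩
  simp only [comap_adj, Function.Embedding.coe_subtype, deleteEdges_adj,
    Set.mem_singleton_iff, and_iff_left_iff_imp]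
  intro _ h
  rw [Sym2.eq_iff] at h
  rcases h with ⟨rfl, rfl⟩ | ⟨rfl, rfl⟩
  · exact hu hx
  · exact hu hy

lemma aux_val_one {m : ℕ} [NeZero m] (hm : 3 ≤ m) : ((1 : Fin m)).val = 1 := by
  rw [Fin.val_one', Nat.mod_eq_of_lt (by omega)]

lemma aux_cyc_adj {m : ℕ} [NeZero m] (hm : 3 ≤ m) (i : Fin m) :
    (SimpleGraph.cycleGraph m).Adj i (i + 1) := by
  rw [SimpleGraph.cycleGraph_adj']
  right
  have h : i + 1 - i = 1 := by ring
  rw [h, aux_val_one hm]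

lemma aux_edge_ne {m : ℕ} [NeZero m] (hm : 3 ≤ m) {i j : Fin m} (hij : i ≠ j) :
    (s(i, i+1) : Sym2 (Fin m)) ≠ s(j, j+1) := by
  intro h
  rw [Sym2.eq_iff] at h
  rcases h with ⟨rfl, -⟩ | ⟨h1, h2⟩
  · exact hij rfl
  · have hjj : j + 1 + 1 = j := by rw [← h1]; exact h2
    have h2' : (2 : Fin m) = 0 := by
      have h3 : j + (1 + 1) = j + 0 := by rw [← add_assoc, hjj, add_zero]
      have h4 := add_left_cancel h3
      rwa [one_add_one_eq_two] at h4
    have h5 := congrArg Fin.val h2'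
    have h6 : (2 : Fin m).val = 2 % m := rfl
    rw [h6, Nat.mod_eq_of_lt (by omega), Fin.val_zero] at h5
    omega

lemma aux_cast_succ_ne {m : ℕ} [NeZero m] (hm : 3 ≤ m) (k : ℕ) (hk : k + 1 < m) :
    ((k : Fin m) + 1) ≠ 0 := by
  intro h
  have h1 := congrArg Fin.val h
  simp only [Fin.add_def, Fin.val_natCast, Fin.val_one', Fin.val_zero] at h1
  rw [Nat.mod_eq_of_lt (show (1:ℕ) < m by omega),
    Nat.mod_eq_of_lt (show k < m by omega),
    Nat.mod_eq_of_lt (show k + 1 < m by omega)] at h1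
  omega

/-- Every connected partition of the cycle graph on `m ≥ 3` vertices is a connected
partition of at least one of the `m` Hamiltonian paths obtained by deleting a single
edge; unless all vertices lie in one block, it is a connected partition of at least two
such paths. -/
theorem stmt_10 (m : ℕ) (hm : 3 ≤ m)
    (P : Finpartition (Finset.univ : Finset (Fin m)))
    (hconn : ∀ b ∈ P.parts, ((SimpleGraph.cycleGraph m).induce (b : Set (Fin m))).Connected) :
    (∃ e ∈ (SimpleGraph.cycleGraph m).edgeSet,
      ∀ b ∈ P.parts,
        (((SimpleGraph.cycleGraph m).deleteEdges {e}).induce (b : Set (Fin m))).Connected) ∧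
    (P.parts.card ≠ 1 →
      ∃ e₁ ∈ (SimpleGraph.cycleGraph m).edgeSet,
        ∃ e₂ ∈ (SimpleGraph.cycleGraph m).edgeSet, e₁ ≠ e₂ ∧
        (∀ b ∈ P.parts,
          (((SimpleGraph.cycleGraph m).deleteEdges {e₁}).induce (b : Set (Fin m))).Connected) ∧
        (∀ b ∈ P.parts,
          (((SimpleGraph.cycleGraph m).deleteEdges {e₂}).induce (b : Set (Fin m))).Connected)) := by
  haveI : NeZero m := ⟨by omega⟩
  -- deleting a "crossing" edge (endpoints in different parts) preserves each induced part
  have key : ∀ i : Fin m, P.part i ≠ P.part (i+1) → ∀ b ∈ P.parts,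
      (((SimpleGraph.cycleGraph m).deleteEdges
        {s(i, i+1)}).induce (b : Set (Fin m))).Connected := by
    intro i hi b hb
    have hcases : i ∉ (b : Set (Fin m)) ∨ (i+1) ∉ (b : Set (Fin m)) := by
      by_contra hc
      push_neg at hc
      obtain ⟨h1, h2⟩ := hc
      rw [Finset.mem_coe] at h1 h2
      exact hi ((P.part_eq_of_mem hb h1).trans (P.part_eq_of_mem hb h2).symm)
    rcases hcases with h | h
    · rw [aux_induce_delete _ _ _ _ h]; exact hconn b hb
    · rw [show (s(i, i+1) : Sym2 (Fin m)) = s(i+1, i) from Sym2.eq_swap,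
        aux_induce_delete _ _ _ _ h]
      exact hconn b hb
  have hmem : ∀ i : Fin m, s(i, i+1) ∈ (SimpleGraph.cycleGraph m).edgeSet :=
    fun i => (SimpleGraph.mem_edgeSet _).mpr (aux_cyc_adj hm i)
  by_cases hall : ∀ i : Fin m, P.part i = P.part (i + 1)
  · -- all vertices in one block
    have hconst : ∀ i : Fin m, P.part i = P.part 0 := by
      have auxk : ∀ k : ℕ, P.part ((k : Fin m)) = P.part 0 := by
        intro k
        induction k with
        | zero => norm_num
        | succ n ih =>
          have hc : ((n+1 : ℕ) : Fin m) = (n : Fin m) + 1 := by push_cast; ring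
          rw [hc, ← hall]; exact ih
      intro i
      rw [← Fin.cast_val_eq_self i]; exact auxk i.val
    have hbuniv : ∀ b ∈ P.parts, b = Finset.univ := by
      intro b hb
      obtain ⟨x, hx⟩ := P.nonempty_of_mem_parts hb
      have hbx : P.part x = b := P.part_eq_of_mem hb hx
      apply Finset.eq_univ_iff_forall.mpr
      intro j
      have hj : P.part j = b := by rw [hconst j, ← hconst x, hbx]
      rw [← hj]; exact P.mem_part (Finset.mem_univ j)
    have hcard : P.parts.card = 1 := by
      rw [Finset.card_eq_one]
      refine ⟨Finset.univ, Finset.eq_singleton_iff_unique_mem.mpr ⟨?_, hbuniv⟩⟩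
      have := P.part_mem.mpr (Finset.mem_univ (0 : Fin m))
      rwa [hbuniv _ this] at this
    constructor
    · -- delete the edge s(-1, 0): remaining graph contains the path graph
      refine ⟨s(-1, 0), ?_, ?_⟩
      · rw [SimpleGraph.mem_edgeSet, SimpleGraph.cycleGraph_adj']
        right
        rw [show (0 : Fin m) - (-1) = 1 by ring, aux_val_one hm]
      · intro b hb
        rw [hbuniv b hb, Finset.coe_univ]
        set H := (SimpleGraph.cycleGraph m).deleteEdges {s((-1 : Fin m), 0)} with hH
        have hle : SimpleGraph.pathGraph m ≤ H := by
          intro u v huv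
          rw [SimpleGraph.pathGraph_adj] at huv
          have hadj : (SimpleGraph.cycleGraph m).Adj u v := by
            rw [SimpleGraph.cycleGraph_adj']
            rcases huv with h | h
            · right
              have : v = u + 1 := by
                apply Fin.ext
                simp only [Fin.add_def, Fin.val_one']
                rw [Nat.mod_eq_of_lt (show 1 < m by omega), Nat.mod_eq_of_lt (by omega)]
                omega
              rw [this, show u + 1 - u = 1 by ring, aux_val_one hm]
            · left
              have : u = v + 1 := by
                apply Fin.ext
                simp only [Fin.add_def, Fin.val_one']
                rw [Nat.mod_eq_of_lt (show 1 < m by omega), Nat.mod_eq_of_lt (by omega)]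
                omega
              rw [this, show v + 1 - v = 1 by ring, aux_val_one hm]
          refine ⟨hadj, ?_⟩
          intro hmem'
          rw [SimpleGraph.fromEdgeSet_adj, Set.mem_singleton_iff, Sym2.eq_iff] at hmem'
          have hneg : ((-1 : Fin m)).val = m - 1 := by
            have h0 : ((-1 : Fin m) + 1) = 0 := by ring
            have h1 := congrArg Fin.val h0
            simp only [Fin.add_def, Fin.val_one', Fin.val_zero] at h1
            rw [Nat.mod_eq_of_lt (show 1 < m by omega)] at h1
            have h2 := ((-1 : Fin m)).isLt
            rcases Nat.lt_or_ge ((-1 : Fin m)).val (m - 1) with h3 | h3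
            · rw [Nat.mod_eq_of_lt (by omega)] at h1; omega
            · omega
          rcases hmem'.1 with ⟨rfl, rfl⟩ | ⟨rfl, rfl⟩ <;>
            · simp only [hneg, Fin.val_zero] at huv
              omega
        have hpc : (SimpleGraph.pathGraph m).Connected := by
          obtain ⟨n, rfl⟩ : ∃ n, m = n + 1 := ⟨m - 1, by omega⟩
          exact SimpleGraph.pathGraph_connected n
        exact (SimpleGraph.induceUnivIso H).connected_iff.mpr (hpc.mono hle)
    · intro hc; exact absurd hcard hc
  · push_neg at hall
    obtain ⟨i, hi⟩ := hall
    -- a second crossing index exists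
    obtain ⟨j, hji, hj⟩ : ∃ j, j ≠ i ∧ P.part j ≠ P.part (j+1) := by
      by_contra hc
      push_neg at hc
      have auxk : ∀ k : ℕ, k + 1 ≤ m → P.part (i+1) = P.part (i + 1 + (k : Fin m)) := by
        intro k
        induction k with
        | zero => intro _; norm_num
        | succ n ih =>
          intro hn
          have ihn := ih (by omega)
          have hne : i + 1 + (n : Fin m) ≠ i := by
            intro he
            have : ((n : Fin m) + 1) = 0 := by
              have := congrArg (· - i) he
              rw [show i + 1 + (n : Fin m) - i = (n : Fin m) + 1 by ring,
                sub_self] at this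
              exact this
            exact aux_cast_succ_ne hm n (by omega) this
          have hstep := hc _ hne
          have hcast : i + 1 + (n : Fin m) + 1 = i + 1 + ((n+1 : ℕ) : Fin m) := by
            push_cast; ring
          rw [ihn, hstep, hcast]
      have hlast := auxk (m - 1) (by omega)
      have hwrap : i + 1 + ((m - 1 : ℕ) : Fin m) = i := by
        have h1 : ((m-1 : ℕ) : Fin m) + 1 = 0 := by
          have h2 : ((m-1 : ℕ) : Fin m) + 1 = ((m-1+1 : ℕ) : Fin m) := by push_cast; ring
          rw [h2, show m-1+1 = m by omega]
          simp
        rw [add_assoc, add_comm (1 : Fin m), h1, add_zero]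
      rw [hwrap] at hlast
      exact hi hlast.symm
    exact ⟨⟨s(i, i+1), hmem i, key i hi⟩, fun _ =>
      ⟨s(i, i+1), hmem i, s(j, j+1), hmem j, aux_edge_ne hm (fun h => hji h.symm),
        key i hi, key j hj⟩⟩
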